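/- Let (K,v) be a Henselian valued field whose residue field has characteristic 0. Then K has no proper immediate algebraic valued field extension, i.e., if (L,w) ⊇ (K,v) is a field-algebraic valued field extension with k_L = k_K and Γ_L = Γ_K, then L = K. -/

import Mathlib

set_option maxHeartbeats 2000000

open Polynomial

section AuxStmt10

variable {L Γ : Type*} [Field L] [AddCommGroup Γ] [LinearOrder Γ] [IsOrderedAddMonoid Γ]

lemma aux10_coe_nsmul (n : ℕ) (t : Γ) :
    ((n • t : Γ) : WithTop Γ) = n • (t : WithTop Γ) := by
  induction n with
  | zero => simp
  | succ n ih => rw [succ_nsmul, succ_nsmul, WithTop.coe_add, ih]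

lemma aux10_coe_line (a : Γ) (n : ℕ) (t : Γ) :
    (a : WithTop Γ) + n • (t : WithTop Γ) = ((a + n • t : Γ) : WithTop Γ) := by
  rw [WithTop.coe_add, aux10_coe_nsmul]

lemma aux10_sum_eq (v : AddValuation L (WithTop Γ)) (F : Finset ℕ) (f : ℕ → L) (h : ℕ)
    (hh : h ∈ F) (hlt : ∀ j ∈ F, j ≠ h → v (f h) < v (f j)) :
    v (∑ j ∈ F, f j) = v (f h) := by
  classical
  rw [← Finset.add_sum_erase F f hh]
  by_cases htop : v (f h) = ⊤
  · have he : F.erase h = ∅ := by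
      by_contra hne
      obtain ⟨j, hj⟩ := Finset.nonempty_iff_ne_empty.2 hne
      have := hlt j (Finset.mem_of_mem_erase hj) (Finset.ne_of_mem_erase hj)
      rw [htop] at this
      exact absurd this (not_top_lt)
    rw [he]
    simp
  · have hrest : v (f h) < v (∑ j ∈ F.erase h, f j) :=
      v.map_lt_sum htop
        (fun j hj => hlt j (Finset.mem_of_mem_erase hj) (Finset.ne_of_mem_erase hj))
    exact v.map_add_eq_of_lt_left hrest

lemma aux10_eval_taylor (f : L[X]) (r y : L) :
    f.eval y = ∑ i ∈ Finset.range (f.natDegree + 1),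
      (Polynomial.taylor r f).coeff i * (y - r) ^ i := by
  conv_lhs => rw [← Polynomial.sum_taylor_eq f r]
  rw [Polynomial.sum_def, Polynomial.eval_finset_sum]
  have hsupp : (Polynomial.taylor r f).support ⊆ Finset.range (f.natDegree + 1) := by
    rw [← Polynomial.natDegree_taylor f r]
    exact Polynomial.supp_subset_range_natDegree_succ
  rw [Finset.sum_subset hsupp]
  · exact Finset.sum_congr rfl (fun i _ => by simp)
  · intro i _ hi
    rw [Polynomial.notMem_support_iff.1 hi]
    simp

lemma aux10_eval_mem (K : Subfield L) (p : L[X]) (hp : ∀ i, p.coeff i ∈ K) {a : L}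
    (ha : a ∈ K) : p.eval a ∈ K := by
  rw [Polynomial.eval_eq_sum_range]
  exact Subfield.sum_mem K (fun i _ => K.mul_mem (hp i) (K.pow_mem ha i))

lemma aux10_hasse_mem (K : Subfield L) (p : L[X]) (hp : ∀ i, p.coeff i ∈ K) (k i : ℕ) :
    (Polynomial.hasseDeriv k p).coeff i ∈ K := by
  rw [Polynomial.hasseDeriv_coeff]
  exact K.mul_mem (natCast_mem K _) (hp _)

/-- Unique minimal line eventually. -/
lemma aux10_UML (S : Set Γ) (hnm : ∀ t ∈ S, ∃ t' ∈ S, t < t') (hne : S.Nonempty)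
    (I : Finset ℕ) (hI : I.Nonempty) (μ : ℕ → Γ) :
    ∃ h ∈ I, ∃ T ∈ S, ∀ t ∈ S, T < t → ∀ j ∈ I, j ≠ h → μ h + h • t < μ j + j • t := by
  classical
  set g : Γ → ℕ → Γ := fun t i => μ i + i • t with hg
  have hfilter : ∀ t : Γ, (I.filter (fun i => ∀ j ∈ I, g t i ≤ g t j)).Nonempty := by
    intro t
    obtain ⟨i, hi, hmin⟩ := I.exists_min_image (g t) hI
    exact ⟨i, Finset.mem_filter.2 ⟨hi, hmin⟩⟩
  set f : Γ → ℕ := fun t => (I.filter (fun i => ∀ j ∈ I, g t i ≤ g t j)).min' (hfilter t)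
    with hf
  have hfI : ∀ t, f t ∈ I := fun t =>
    (Finset.mem_filter.1 (Finset.min'_mem _ (hfilter t))).1
  have hfmin : ∀ t, ∀ j ∈ I, g t (f t) ≤ g t j := fun t =>
    (Finset.mem_filter.1 (Finset.min'_mem _ (hfilter t))).2
  have hfleast : ∀ t i, i ∈ I → (∀ j ∈ I, g t i ≤ g t j) → f t ≤ i := by
    intro t i hi hmin
    exact Finset.min'_le _ _ (Finset.mem_filter.2 ⟨hi, hmin⟩)
  have key : ∀ (t t' : Γ), t < t' → ∀ i j : ℕ, i < j → g t i ≤ g t j → g t' i < g t' j := by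
    intro t t' htt i j hij hle
    have hd : (0:Γ) < t' - t := sub_pos.2 htt
    have hshift : ∀ k : ℕ, g t' k = g t k + k • (t' - t) := by
      intro k
      simp only [hg]
      have h1 : t + (t' - t) = t' := by abel
      have h2 : k • t' = k • t + k • (t' - t) := by rw [← smul_add, h1]
      rw [h2, add_assoc]
    rw [hshift i, hshift j]
    have hsm : i • (t' - t) < j • (t' - t) := by
      have hk : j = i + (j - i) := by omega
      rw [hk, add_nsmul]
      have : (0:Γ) < (j - i) • (t' - t) := nsmul_pos hd (by omega)
      exact lt_add_of_pos_right _ this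
    exact add_lt_add_of_le_of_lt hle hsm
  have mono : ∀ t t' : Γ, t < t' → f t' ≤ f t := by
    intro t t' htt
    by_contra hcon
    push_neg at hcon
    have h1 : g t (f t) ≤ g t (f t') := hfmin t _ (hfI t')
    have h2 : g t' (f t) < g t' (f t') := key t t' htt _ _ hcon h1
    exact absurd (hfmin t' (f t) (hfI t)) (not_le.2 h2)
  have hset : {n : ℕ | ∃ t ∈ S, f t = n}.Nonempty :=
    ⟨f hne.choose, hne.choose, hne.choose_spec, rfl⟩
  obtain ⟨ts, htsS, hts⟩ := Nat.sInf_mem hset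
  set h0 : ℕ := sInf {n : ℕ | ∃ t ∈ S, f t = n} with hh0
  obtain ⟨T, hTS, hT⟩ := hnm ts htsS
  have hfeq : ∀ t ∈ S, ts < t → f t = h0 := by
    intro t htS htt
    refine le_antisymm ?_ (Nat.sInf_le ⟨t, htS, rfl⟩)
    calc f t ≤ f ts := mono _ _ htt
    _ = h0 := hts
  refine ⟨h0, by rw [← hts]; exact hfI _, T, hTS, ?_⟩
  intro t htS hTt j hjI hjne
  have htst : ts < t := lt_trans hT hTt
  have hftt : f t = h0 := hfeq t htS htst
  have hfTT : f T = h0 := hfeq T hTS hT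
  rcases lt_or_gt_of_ne hjne with hj | hj
  · have hle : g t h0 ≤ g t j := by rw [← hftt]; exact hfmin t _ hjI
    rcases lt_or_eq_of_le hle with hlt | heq2
    · exact hlt
    · exfalso
      have hmin' : ∀ k ∈ I, g t h0 ≤ g t k := by simpa [hftt] using hfmin t
      have hjmin : ∀ k ∈ I, g t j ≤ g t k := fun k hk => heq2 ▸ hmin' k hk
      have hle2 := hfleast t j hjI hjmin
      rw [hftt] at hle2
      omega
  · have hle : g T h0 ≤ g T j := by rw [← hfTT]; exact hfmin T _ hjI
    exact key T t hTt h0 j hj hle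

end AuxStmt10

/-- Let `(K,v)` be a Henselian valued field whose residue field has characteristic `0`
(here `K` is a subfield of `L` carrying the restricted valuation; Henselianity of `K`
is expressed by the simple-zero-lifting property for polynomials over `O_K`, residue
characteristic `0` by `v(n) = 0` for positive integers `n`). If `L` is an algebraic
valued field extension of `K` which is immediate (same residue field and same value
group), then `L = K`. -/
theorem stmt_10 {L Γ : Type*} [Field L] [AddCommGroup Γ] [LinearOrder Γ] [IsOrderedAddMonoid Γ]
    (v : AddValuation L (WithTop Γ)) (K : Subfield L)
    (hres0 : ∀ n : ℕ, 0 < n → v (n : L) = 0)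
    (hhens : ∀ P : Polynomial L, (∀ i, P.coeff i ∈ K ∧ 0 ≤ v (P.coeff i)) →
      ∀ a ∈ K, 0 ≤ v a → 0 < v (P.eval a) → v (P.derivative.eval a) = 0 →
        ∃ b ∈ K, 0 ≤ v b ∧ P.eval b = 0 ∧ 0 < v (b - a))
    (halg : ∀ x : L, ∃ P : Polynomial L, P ≠ 0 ∧ (∀ i, P.coeff i ∈ K) ∧ P.eval x = 0)
    (hΓ : ∀ x : L, x ≠ 0 → ∃ b ∈ K, b ≠ 0 ∧ v b = v x)
    (hk : ∀ x : L, v x = 0 → ∃ b ∈ K, 0 < v (x - b)) :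
    ∀ x : L, x ∈ K := by
  intro x
  by_contra hx
  classical
  have hx0 : x ≠ 0 := fun h => hx (h ▸ K.zero_mem)
  -- the set of approximation levels
  set S : Set Γ := {t : Γ | ∃ c ∈ K, v (x - c) = (t : WithTop Γ)} with hSdef
  have hSex : ∀ t : Γ, ∃ c : L, t ∈ S → c ∈ K ∧ v (x - c) = (t : WithTop Γ) := by
    intro t
    by_cases h : t ∈ S
    · obtain ⟨c, hc1, hc2⟩ := h
      exact ⟨c, fun _ => ⟨hc1, hc2⟩⟩
    · exact ⟨0, fun h' => absurd h' h⟩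
  choose b hb using hSex
  have hbK : ∀ t ∈ S, b t ∈ K := fun t ht => (hb t ht).1
  have hbv : ∀ t ∈ S, v (x - b t) = (t : WithTop Γ) := fun t ht => (hb t ht).2
  have hSne : S.Nonempty := by
    obtain ⟨τ, hτ⟩ := WithTop.ne_top_iff_exists.1 (v.ne_top_iff.2 hx0)
    exact ⟨τ, 0, K.zero_mem, by rw [sub_zero]; exact hτ.symm⟩
  -- S has no maximum
  have hnm : ∀ t ∈ S, ∃ t' ∈ S, t < t' := by
    intro t ht
    have hbKt := hbK t ht
    have hbvt := hbv t ht
    have hxb : x - b t ≠ 0 := by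
      intro h0
      exact hx (by rw [sub_eq_zero] at h0; rw [h0]; exact hbKt)
    obtain ⟨e, heK, he0, hev⟩ := hΓ (x - b t) hxb
    have hev' : v e = (t : WithTop Γ) := by rw [hev, hbvt]
    have hz : v ((x - b t) / e) = 0 := by
      rw [v.map_div, hbvt, hev',
        show ((t : WithTop Γ) - (t : WithTop Γ)) = ((t - t : Γ) : WithTop Γ) from rfl,
        sub_self, WithTop.coe_zero]
    obtain ⟨d, hdK, hdv⟩ := hk _ hz
    have hrw : x - (b t + e * d) = e * ((x - b t) / e - d) := by
      rw [mul_sub, mul_div_cancel₀ _ he0]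
      ring
    have hne : x - (b t + e * d) ≠ 0 := by
      intro h0
      rw [sub_eq_zero] at h0
      exact hx (h0 ▸ K.add_mem hbKt (K.mul_mem heK hdK))
    obtain ⟨t'', ht''⟩ := WithTop.ne_top_iff_exists.1 (v.ne_top_iff.2 hne)
    refine ⟨t'', ⟨b t + e * d, K.add_mem hbKt (K.mul_mem heK hdK), ht''.symm⟩, ?_⟩
    have hval : v (x - (b t + e * d)) = (t : WithTop Γ) + v ((x - b t) / e - d) := by
      rw [hrw, v.map_mul, hev']
    rw [← ht''] at hval
    have : (t : WithTop Γ) < (t'' : WithTop Γ) := by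
      rw [hval]
      calc (t : WithTop Γ) = (t : WithTop Γ) + 0 := by rw [add_zero]
      _ < (t : WithTop Γ) + v ((x - b t) / e - d) := by
          exact WithTop.add_lt_add_left (WithTop.coe_ne_top) hdv
    exact_mod_cast this
  have hmaxS : ∀ t1 ∈ S, ∀ t2 ∈ S, t1 ⊔ t2 ∈ S := by
    intro t1 h1 t2 h2
    rcases le_total t1 t2 with h | h
    · rw [sup_eq_right.2 h]; exact h2
    · rw [sup_eq_left.2 h]; exact h1
  -- generic instability criterion
  have hunst : ∀ (R : L[X]) (h0 : ℕ), h0 ≠ 0 → ∀ (c : Γ), ∀ T' ∈ S,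
      (∀ t ∈ S, T' < t → v (R.eval (b t)) = ((c + h0 • t : Γ) : WithTop Γ)) →
      ¬ (∃ t₀ ∈ S, ∃ γ : WithTop Γ, ∀ t ∈ S, t₀ < t → v (R.eval (b t)) = γ) := by
    rintro R h0 hh0 c T' hT'S hval ⟨t₀, ht₀S, γ, hγ⟩
    obtain ⟨t1, ht1S, ht1⟩ := hnm (T' ⊔ t₀) (hmaxS _ hT'S _ ht₀S)
    obtain ⟨t2, ht2S, ht2⟩ := hnm t1 ht1S
    have e1 : ((c + h0 • t1 : Γ) : WithTop Γ) = γ := by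
      rw [← hval t1 ht1S (lt_of_le_of_lt le_sup_left ht1)]
      exact hγ t1 ht1S (lt_of_le_of_lt le_sup_right ht1)
    have e2 : ((c + h0 • t2 : Γ) : WithTop Γ) = γ := by
      rw [← hval t2 ht2S (lt_of_le_of_lt le_sup_left (lt_trans ht1 ht2))]
      exact hγ t2 ht2S (lt_of_le_of_lt le_sup_right (lt_trans ht1 ht2))
    have e3 : c + h0 • t1 = c + h0 • t2 := by exact_mod_cast e1.trans e2.symm
    have e4 : h0 • t1 = h0 • t2 := add_left_cancel e3
    exact absurd e4 (ne_of_lt (nsmul_lt_nsmul_right hh0 ht2))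
  -- difference of approximants
  have hbdiff : ∀ t ∈ S, ∀ t' ∈ S, t < t' → v (b t' - b t) = (t : WithTop Γ) := by
    intro t htS t' ht'S htt
    have h1 : b t' - b t = (x - b t) - (x - b t') := by ring
    have h2 : v (x - b t) < v (x - b t') := by
      rw [hbv t htS, hbv t' ht'S]
      exact_mod_cast htt
    rw [h1, v.map_sub_eq_of_lt_left h2]
    exact hbv t htS
  -- Step B : the polynomial P from algebraicity is unstable
  obtain ⟨P, hP0, hPK, hPx⟩ := halg x
  have hNP1 : 1 ≤ P.natDegree := by
    by_contra hcon
    push_neg at hcon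
    have h0 : P.natDegree = 0 := by omega
    have hC := Polynomial.eq_C_of_natDegree_eq_zero h0
    rw [hC] at hPx
    simp at hPx
    exact hP0 (by rw [hC, hPx, map_zero])
  have htayP : Polynomial.taylor x P ≠ 0 := by
    intro h0
    apply hP0
    have hs := Polynomial.sum_taylor_eq P x
    rw [h0, Polynomial.sum_zero_index] at hs
    exact hs.symm
  have haPN : (Polynomial.taylor x P).coeff P.natDegree ≠ 0 := by
    have hdeg : (Polynomial.taylor x P).natDegree = P.natDegree := Polynomial.natDegree_taylor P x
    rw [← hdeg]
    exact mt Polynomial.leadingCoeff_eq_zero.1 htayP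
  have haP0 : (Polynomial.taylor x P).coeff 0 = 0 := by
    rw [Polynomial.taylor_coeff_zero]
    exact hPx
  set IP := (Finset.Icc 1 P.natDegree).filter
    (fun i => (Polynomial.taylor x P).coeff i ≠ 0) with hIPdef
  have hIPne : IP.Nonempty :=
    ⟨P.natDegree, Finset.mem_filter.2 ⟨Finset.mem_Icc.2 ⟨hNP1, le_refl _⟩, haPN⟩⟩
  set μP : ℕ → Γ := fun i => (v ((Polynomial.taylor x P).coeff i)).untopD 0 with hμPdef
  have hμPe : ∀ i ∈ IP, (↑(μP i) : WithTop Γ) = v ((Polynomial.taylor x P).coeff i) := by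
    intro i hi
    have hne : (Polynomial.taylor x P).coeff i ≠ 0 := (Finset.mem_filter.1 hi).2
    obtain ⟨g, hg⟩ := WithTop.ne_top_iff_exists.1 (v.ne_top_iff.2 hne)
    have h2 : v ((Polynomial.taylor x P).coeff i) = (g : WithTop Γ) := hg.symm
    rw [hμPdef]
    simp only [h2, WithTop.untopD_coe]
  obtain ⟨hp, hhpIP, TP, hTPS, hPuml⟩ := aux10_UML S hnm hSne IP hIPne μP
  have hhp := Finset.mem_Icc.1 (Finset.mem_filter.1 hhpIP).1
  have hPval : ∀ t ∈ S, TP < t →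
      v (P.eval (b t)) = ((μP hp + hp • t : Γ) : WithTop Γ) := by
    intro t htS hTt
    have hbx : v (b t - x) = (t : WithTop Γ) := by
      rw [v.map_sub_swap]
      exact hbv t htS
    have hterm : ∀ i : ℕ, v ((Polynomial.taylor x P).coeff i * (b t - x) ^ i)
        = v ((Polynomial.taylor x P).coeff i) + i • (t : WithTop Γ) := by
      intro i
      rw [v.map_mul, v.map_pow, hbx]
    have hcmp : ∀ j ∈ Finset.range (P.natDegree + 1), j ≠ hp →
        v ((Polynomial.taylor x P).coeff hp * (b t - x) ^ hp)
          < v ((Polynomial.taylor x P).coeff j * (b t - x) ^ j) := by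
      intro j hj hjne
      rw [hterm hp, hterm j, ← hμPe hp hhpIP, aux10_coe_line]
      by_cases hj0 : (Polynomial.taylor x P).coeff j = 0
      · rw [hj0, v.map_zero, top_add]
        exact WithTop.coe_lt_top _
      · have hj1 : 1 ≤ j := by
          rcases Nat.eq_zero_or_pos j with rfl | h1
          · exact absurd haP0 hj0
          · exact h1
        have hjIP : j ∈ IP := Finset.mem_filter.2
          ⟨Finset.mem_Icc.2 ⟨hj1, by have := Finset.mem_range.1 hj; omega⟩, hj0⟩
        rw [← hμPe j hjIP, aux10_coe_line, WithTop.coe_lt_coe]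
        exact hPuml t htS hTt j hjIP hjne
    have hhpmem : hp ∈ Finset.range (P.natDegree + 1) := Finset.mem_range.2 (by omega)
    rw [aux10_eval_taylor P x (b t), aux10_sum_eq v _ _ hp hhpmem hcmp, hterm hp,
      ← hμPe hp hhpIP, aux10_coe_line]
  have hPunst : ¬ (∃ t₀ ∈ S, ∃ γ : WithTop Γ, ∀ t ∈ S, t₀ < t → v (P.eval (b t)) = γ) :=
    hunst P hp (by omega) (μP hp) TP hTPS hPval
  -- Step C : minimal unstable polynomial Q
  set DS : Set ℕ := {n | ∃ R : L[X], (∀ i, R.coeff i ∈ K) ∧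
    ¬ (∃ t₀ ∈ S, ∃ γ : WithTop Γ, ∀ t ∈ S, t₀ < t → v (R.eval (b t)) = γ) ∧
    R.natDegree = n} with hDSdef
  have hDSne : DS.Nonempty := ⟨P.natDegree, P, hPK, hPunst, rfl⟩
  set N : ℕ := sInf DS with hNdef
  obtain ⟨Q, hQK, hQunst, hQdeg⟩ := Nat.sInf_mem hDSne
  rw [← hNdef] at hQdeg
  have hmin : ∀ R : L[X], (∀ i, R.coeff i ∈ K) → R.natDegree < N →
      (∃ t₀ ∈ S, ∃ γ : WithTop Γ, ∀ t ∈ S, t₀ < t → v (R.eval (b t)) = γ) := by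
    intro R hRK hRd
    by_contra hcon
    have hmem : R.natDegree ∈ DS := ⟨R, hRK, hcon, rfl⟩
    have := Nat.sInf_le hmem
    omega
  have hQ0 : Q ≠ 0 := by
    rintro rfl
    exact hQunst ⟨hSne.choose, hSne.choose_spec, ⊤, fun t ht htt => by simp⟩
  have hN1 : 1 ≤ N := by
    by_contra hcon
    push_neg at hcon
    have h0 : Q.natDegree = 0 := by omega
    have hC := Polynomial.eq_C_of_natDegree_eq_zero h0
    exact hQunst ⟨hSne.choose, hSne.choose_spec, v (Q.coeff 0),
      fun t ht htt => by rw [hC]; simp⟩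
  -- Step D : stability of Hasse derivatives with a common threshold
  have hQst : ∀ i : ℕ, ∃ T, T ∈ S ∧ ∃ γ : WithTop Γ, i ∈ Finset.Icc 1 N →
      ∀ t ∈ S, T < t → v ((Polynomial.hasseDeriv i Q).eval (b t)) = γ := by
    intro i
    by_cases hi : i ∈ Finset.Icc 1 N
    · have hIcc := Finset.mem_Icc.1 hi
      have hdeg : (Polynomial.hasseDeriv i Q).natDegree < N := by
        have h1 := Polynomial.natDegree_hasseDeriv_le Q i
        rw [hQdeg] at h1
        omega
      obtain ⟨T, hTS, γ, hγ⟩ := hmin _ (fun j => aux10_hasse_mem K Q hQK i j) hdeg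
      exact ⟨T, hTS, γ, fun _ => hγ⟩
    · exact ⟨hSne.choose, hSne.choose_spec, ⊤, fun h => absurd h hi⟩
  choose Ti hTiS hμi using hQst
  choose μi hμi using hμi
  have hIccne : (Finset.Icc 1 N).Nonempty := ⟨N, Finset.mem_Icc.2 ⟨hN1, le_refl N⟩⟩
  set Tall : Γ := (Finset.Icc 1 N).sup' hIccne Ti with hTalldef
  have hTallS : Tall ∈ S := by
    refine Finset.sup'_mem S ?_ _ hIccne Ti (fun i _ => hTiS i)
    intro a ha c hc
    exact hmaxS a ha c hc
  have hstab : ∀ i ∈ Finset.Icc 1 N, ∀ t ∈ S, Tall < t →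
      v ((Polynomial.hasseDeriv i Q).eval (b t)) = μi i := by
    intro i hi t htS htt
    exact hμi i hi t htS (lt_of_le_of_lt (Finset.le_sup' Ti hi) htt)
  -- Step E : index set and eventual values
  have hCN : Polynomial.hasseDeriv N Q = Polynomial.C (Q.coeff N) := by
    ext k
    rw [Polynomial.hasseDeriv_coeff, Polynomial.coeff_C]
    rcases Nat.eq_zero_or_pos k with rfl | hk
    · simp
    · rw [if_neg (by omega)]
      rw [Polynomial.coeff_eq_zero_of_natDegree_lt (by rw [hQdeg]; omega)]
      simp
  have hQcoeffN : Q.coeff N ≠ 0 := by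
    rw [← hQdeg]
    exact mt Polynomial.leadingCoeff_eq_zero.1 hQ0
  have hμiN : μi N = v (Q.coeff N) := by
    obtain ⟨t1, ht1S, ht1⟩ := hnm Tall hTallS
    have hv1 := hstab N (Finset.mem_Icc.2 ⟨hN1, le_refl N⟩) t1 ht1S ht1
    rw [hCN] at hv1
    simp at hv1
    exact hv1.symm
  set IQ := (Finset.Icc 1 N).filter (fun i => μi i ≠ ⊤) with hIQdef
  have hNIQ : N ∈ IQ := by
    refine Finset.mem_filter.2 ⟨Finset.mem_Icc.2 ⟨hN1, le_refl N⟩, ?_⟩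
    rw [hμiN]
    exact v.ne_top_iff.2 hQcoeffN
  set μ' : ℕ → Γ := fun i => (μi i).untopD 0 with hμ'def
  have hμ'e : ∀ i ∈ IQ, (↑(μ' i) : WithTop Γ) = μi i := by
    intro i hi
    have hne : μi i ≠ ⊤ := (Finset.mem_filter.1 hi).2
    obtain ⟨g, hg⟩ := WithTop.ne_top_iff_exists.1 hne
    have h2 : μi i = (g : WithTop Γ) := hg.symm
    rw [hμ'def]
    simp only [h2, WithTop.untopD_coe]
  obtain ⟨h, hhIQ, TU, hTUS, huml⟩ := aux10_UML S hnm hSne IQ ⟨N, hNIQ⟩ μ'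
  have hhIcc : h ∈ Finset.Icc 1 N := (Finset.mem_filter.1 hhIQ).1
  have hh1N := Finset.mem_Icc.1 hhIcc
  -- taylor coefficients at b t have the stable values
  have hterm : ∀ t ∈ S, Tall < t → ∀ i ∈ Finset.Icc 1 N,
      v ((Polynomial.taylor (b t) Q).coeff i) = μi i := by
    intro t htS htt i hi
    rw [Polynomial.taylor_coeff]
    exact hstab i hi t htS htt
  have hT1S : Tall ⊔ TU ∈ S := hmaxS _ hTallS _ hTUS
  -- Step F : Lemma 1
  have L1 : ∀ t ∈ S, Tall ⊔ TU < t →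
      v (Q.eval (b t)) = ((μ' h + h • t : Γ) : WithTop Γ) := by
    intro t htS htlt
    have htall : Tall < t := lt_of_le_of_lt le_sup_left htlt
    have htu : TU < t := lt_of_le_of_lt le_sup_right htlt
    have hdiffall : ∀ t' ∈ S, t < t' →
        v (Q.eval (b t') - Q.eval (b t)) = ((μ' h + h • t : Γ) : WithTop Γ) := by
      intro t' ht'S htt'
      have hβ := hbdiff t htS t' ht'S htt'
      have hsplit : Q.eval (b t') - Q.eval (b t)
          = ∑ i ∈ Finset.Icc 1 N,
            (Polynomial.taylor (b t) Q).coeff i * (b t' - b t) ^ i := by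
        have h0mem : (0:ℕ) ∈ Finset.range (Q.natDegree + 1) := by simp
        rw [aux10_eval_taylor Q (b t) (b t'), ← Finset.add_sum_erase _ _ h0mem,
          Polynomial.taylor_coeff_zero]
        have herase : (Finset.range (Q.natDegree + 1)).erase 0 = Finset.Icc 1 N := by
          ext i
          simp only [Finset.mem_erase, Finset.mem_range, Finset.mem_Icc, hQdeg]
          omega
        rw [herase]
        ring
      have hcmp : ∀ j ∈ Finset.Icc 1 N, j ≠ h →
          v ((Polynomial.taylor (b t) Q).coeff h * (b t' - b t) ^ h)
            < v ((Polynomial.taylor (b t) Q).coeff j * (b t' - b t) ^ j) := by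
        intro j hj hjne
        rw [v.map_mul, v.map_pow, hβ, v.map_mul, v.map_pow, hβ,
          hterm t htS htall h hhIcc, hterm t htS htall j hj, ← hμ'e h hhIQ, aux10_coe_line]
        by_cases hjI : j ∈ IQ
        · rw [← hμ'e j hjI, aux10_coe_line, WithTop.coe_lt_coe]
          exact huml t htS htu j hjI hjne
        · have htop : μi j = ⊤ := by
            by_contra hne
            exact hjI (Finset.mem_filter.2 ⟨hj, hne⟩)
          rw [htop, top_add]
          exact WithTop.coe_lt_top _
      rw [hsplit, aux10_sum_eq v _ _ h hhIcc hcmp, v.map_mul, v.map_pow, hβ,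
        hterm t htS htall h hhIcc, ← hμ'e h hhIQ, aux10_coe_line]
    by_contra hne
    apply hQunst
    refine ⟨t, htS, min (v (Q.eval (b t))) ((μ' h + h • t : Γ) : WithTop Γ), ?_⟩
    intro t' ht'S htt'
    have heq : Q.eval (b t') = Q.eval (b t) + (Q.eval (b t') - Q.eval (b t)) := by ring
    have hdist : v (Q.eval (b t)) ≠ v (Q.eval (b t') - Q.eval (b t)) := by
      rw [hdiffall t' ht'S htt']
      exact hne
    rw [heq, v.map_add_of_distinct_val hdist, hdiffall t' ht'S htt']
  -- Step G : apply Hensel's lemma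
  obtain ⟨t, htS, htlt⟩ := hnm (Tall ⊔ TU) hT1S
  obtain ⟨t', ht'S, htt'⟩ := hnm t htS
  have htall : Tall < t := lt_of_le_of_lt le_sup_left htlt
  have htu : TU < t := lt_of_le_of_lt le_sup_right htlt
  have ht'lt : Tall ⊔ TU < t' := lt_trans htlt htt'
  have hsv : v (b t' - b t) = (t : WithTop Γ) := hbdiff t htS t' ht'S htt'
  have hsK : b t' - b t ∈ K := K.sub_mem (hbK t' ht'S) (hbK t htS)
  have hs0 : b t' - b t ≠ 0 := by
    intro h0
    rw [h0, v.map_zero] at hsv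
    exact WithTop.coe_ne_top hsv.symm
  have htdK : ∀ i : ℕ, (Polynomial.taylor (b t) Q).coeff i ∈ K := by
    intro i
    rw [Polynomial.taylor_coeff]
    exact aux10_eval_mem K _ (fun j => aux10_hasse_mem K Q hQK i j) (hbK t htS)
  have htd0 : v ((Polynomial.taylor (b t) Q).coeff 0) = ((μ' h + h • t : Γ) : WithTop Γ) := by
    rw [Polynomial.taylor_coeff_zero]
    exact L1 t htS htlt
  have htdh : v ((Polynomial.taylor (b t) Q).coeff h) = ((μ' h : Γ) : WithTop Γ) := by
    rw [hterm t htS htall h hhIcc]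
    exact (hμ'e h hhIQ).symm
  have htdh0 : (Polynomial.taylor (b t) Q).coeff h ≠ 0 := by
    intro h0
    rw [h0, v.map_zero] at htdh
    exact WithTop.coe_ne_top htdh.symm
  set m : L := (Polynomial.taylor (b t) Q).coeff h * (b t' - b t) ^ h with hmdef
  have hm0 : m ≠ 0 := mul_ne_zero htdh0 (pow_ne_zero _ hs0)
  have hmv : v m = ((μ' h + h • t : Γ) : WithTop Γ) := by
    rw [hmdef, v.map_mul, v.map_pow, hsv, htdh, aux10_coe_line]
  have hmtop : v m ≠ ⊤ := by rw [hmv]; exact WithTop.coe_ne_top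
  have hmK : m ∈ K := K.mul_mem (htdK h) (K.pow_mem hsK h)
  set d : ℕ → L := fun i => (Polynomial.taylor (b t) Q).coeff i * (b t' - b t) ^ i / m
    with hddef
  have hdm : ∀ i, d i * m = (Polynomial.taylor (b t) Q).coeff i * (b t' - b t) ^ i :=
    fun i => div_mul_cancel₀ _ hm0
  have hdK : ∀ i, d i ∈ K := fun i =>
    K.div_mem (K.mul_mem (htdK i) (K.pow_mem hsK i)) hmK
  have hdvm : ∀ i : ℕ, v (d i) + v m
      = v ((Polynomial.taylor (b t) Q).coeff i) + i • (t : WithTop Γ) := by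
    intro i
    rw [← v.map_mul, hdm i, v.map_mul, v.map_pow, hsv]
  have hd0 : v (d 0) = 0 := by
    have hrel := hdvm 0
    rw [htd0, hmv] at hrel
    simp only [zero_nsmul, add_zero] at hrel
    exact WithTop.add_right_cancel WithTop.coe_ne_top (hrel.trans (zero_add _).symm)
  have hdh : v (d h) = 0 := by
    have hrel := hdvm h
    rw [htdh, hmv, aux10_coe_line] at hrel
    exact WithTop.add_right_cancel WithTop.coe_ne_top (hrel.trans (zero_add _).symm)
  have hdgt : ∀ j ∈ Finset.Icc 1 N, j ≠ h → 0 < v (d j) := by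
    intro j hj hjne
    have hrel := hdvm j
    rw [hterm t htS htall j hj, hmv] at hrel
    by_cases hdj : v (d j) = ⊤
    · rw [hdj]
      rw [← WithTop.coe_zero]
      exact WithTop.coe_lt_top _
    · obtain ⟨g, hg⟩ := WithTop.ne_top_iff_exists.1 hdj
      by_cases hjI : j ∈ IQ
      · rw [← hμ'e j hjI, aux10_coe_line, ← hg, ← WithTop.coe_add] at hrel
        have hgeq : g + (μ' h + h • t) = μ' j + j • t := WithTop.coe_inj.1 hrel
        have hcmp : μ' h + h • t < μ' j + j • t := huml t htS htu j hjI hjne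
        rw [← hg, ← WithTop.coe_zero, WithTop.coe_lt_coe]
        have hlt2 : (0:Γ) + (μ' h + h • t) < g + (μ' h + h • t) := by
          rw [zero_add, hgeq]
          exact hcmp
        exact lt_of_add_lt_add_right hlt2
      · exfalso
        have htop : μi j = ⊤ := by
          by_contra hne2
          exact hjI (Finset.mem_filter.2 ⟨hj, hne2⟩)
        rw [htop, top_add, ← hg, ← WithTop.coe_add] at hrel
        exact WithTop.coe_ne_top hrel
  have hdge0 : ∀ j ∈ Finset.range (N+1), 0 ≤ v (d j) := by
    intro j hj
    rcases Nat.eq_zero_or_pos j with rfl | hj1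
    · rw [hd0]
    · by_cases hjh : j = h
      · rw [hjh, hdh]
      · exact le_of_lt (hdgt j (Finset.mem_Icc.2 ⟨hj1, by
          have := Finset.mem_range.1 hj; omega⟩) hjh)
  set D : L[X] := ∑ i ∈ Finset.range (N+1), Polynomial.C (d i) * Polynomial.X ^ i
    with hDdef
  have hDcoeff : ∀ j, D.coeff j = if j ∈ Finset.range (N+1) then d j else 0 := by
    intro j
    rw [hDdef, Polynomial.finset_sum_coeff]
    simp only [Polynomial.coeff_C_mul, Polynomial.coeff_X_pow, mul_ite, mul_one, mul_zero]
    rw [Finset.sum_ite_eq]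
  have hDeval : ∀ z : L, D.eval z = ∑ i ∈ Finset.range (N+1), d i * z ^ i := by
    intro z
    rw [hDdef, Polynomial.eval_finset_sum]
    simp
  have hDkey : ∀ z : L, D.eval z * m = Q.eval (b t + (b t' - b t) * z) := by
    intro z
    rw [hDeval, Finset.sum_mul, aux10_eval_taylor Q (b t) (b t + (b t' - b t) * z), hQdeg]
    refine Finset.sum_congr rfl (fun i _ => ?_)
    have h2 : b t + (b t' - b t) * z - b t = (b t' - b t) * z := by ring
    rw [h2, mul_pow]
    linear_combination (z ^ i) * hdm i
  have hDcond : ∀ i, D.coeff i ∈ K ∧ 0 ≤ v (D.coeff i) := by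
    intro i
    rw [hDcoeff i]
    by_cases hi : i ∈ Finset.range (N+1)
    · rw [if_pos hi]
      exact ⟨hdK i, hdge0 i hi⟩
    · rw [if_neg hi]
      exact ⟨K.zero_mem, by rw [v.map_zero]; exact le_top⟩
  have hD1 : 0 < v (D.eval 1) := by
    have hkey := hDkey 1
    rw [mul_one, show b t + (b t' - b t) = b t' by ring] at hkey
    have hrel : v (D.eval 1) + v m = ((μ' h + h • t' : Γ) : WithTop Γ) := by
      rw [← v.map_mul, hkey]
      exact L1 t' ht'S ht'lt
    by_cases hdtop : v (D.eval 1) = ⊤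
    · rw [hdtop, ← WithTop.coe_zero]
      exact WithTop.coe_lt_top _
    · obtain ⟨g, hg⟩ := WithTop.ne_top_iff_exists.1 hdtop
      rw [← hg, hmv, ← WithTop.coe_add] at hrel
      have hgeq : g + (μ' h + h • t) = μ' h + h • t' := WithTop.coe_inj.1 hrel
      rw [← hg, ← WithTop.coe_zero, WithTop.coe_lt_coe]
      have hst : h • t < h • t' := nsmul_lt_nsmul_right (by omega) htt'
      have hlt2 : (0:Γ) + (μ' h + h • t) < g + (μ' h + h • t) := by
        rw [zero_add, hgeq]
        exact add_lt_add_right hst _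
      exact lt_of_add_lt_add_right hlt2
  have hDderiv : (Polynomial.derivative D).eval 1
      = ∑ i ∈ Finset.range (N+1), d i * (i : L) := by
    rw [hDdef, Polynomial.derivative_sum, Polynomial.eval_finset_sum]
    refine Finset.sum_congr rfl (fun i _ => ?_)
    rw [Polynomial.derivative_C_mul_X_pow]
    simp
  have hvdh : v (d h * (h : L)) = 0 := by
    rw [v.map_mul, hdh, hres0 h (by omega), add_zero]
  have hD'1 : v ((Polynomial.derivative D).eval 1) = 0 := by
    rw [hDderiv]
    have hcmp : ∀ j ∈ Finset.range (N+1), j ≠ h →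
        v (d h * (h:L)) < v (d j * (j:L)) := by
      intro j hj hjne
      rw [hvdh]
      rcases Nat.eq_zero_or_pos j with rfl | hj1
      · rw [Nat.cast_zero, mul_zero, v.map_zero, ← WithTop.coe_zero]
        exact WithTop.coe_lt_top _
      · rw [v.map_mul, hres0 j hj1, add_zero]
        exact hdgt j (Finset.mem_Icc.2 ⟨hj1, by
          have := Finset.mem_range.1 hj; omega⟩) hjne
    rw [aux10_sum_eq v _ _ h (Finset.mem_range.2 (by omega)) hcmp]
    exact hvdh
  obtain ⟨ρ, hρK, hρv, hρroot, hρ1⟩ := hhens D hDcond 1 K.one_mem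
    (le_of_eq (v.map_one).symm) hD1 hD'1
  have hcK : b t + (b t' - b t) * ρ ∈ K := K.add_mem (hbK t htS) (K.mul_mem hsK hρK)
  have hroot : Q.eval (b t + (b t' - b t) * ρ) = 0 := by
    rw [← hDkey ρ, hρroot, zero_mul]
  -- Step H : factor Q over K
  set cc : ↥K := ⟨b t + (b t' - b t) * ρ, hcK⟩ with hccdef
  set q' : Polynomial ↥K := ∑ i ∈ Finset.range (N+1),
    Polynomial.C (⟨Q.coeff i, hQK i⟩ : ↥K) * Polynomial.X ^ i with hq'def
  have hq'coeff : ∀ j, q'.coeff j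
      = if j ∈ Finset.range (N+1) then (⟨Q.coeff j, hQK j⟩ : ↥K) else 0 := by
    intro j
    rw [hq'def, Polynomial.finset_sum_coeff]
    simp only [Polynomial.coeff_C_mul, Polynomial.coeff_X_pow, mul_ite, mul_one, mul_zero]
    rw [Finset.sum_ite_eq]
  have hq'map : q'.map (K.subtype) = Q := by
    ext j
    rw [Polynomial.coeff_map, hq'coeff j]
    by_cases hj : j ∈ Finset.range (N+1)
    · rw [if_pos hj]
      rfl
    · rw [if_neg hj]
      have hz : Q.coeff j = 0 := Polynomial.coeff_eq_zero_of_natDegree_lt (by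
        rw [hQdeg]
        have hj2 : ¬ j < N + 1 := fun hc => hj (Finset.mem_range.2 hc)
        omega)
      rw [hz]
      simp
  have hq'root : q'.eval cc = 0 := by
    have h1 : (q'.map (K.subtype)).eval ((K.subtype) cc) = (K.subtype) (q'.eval cc) := by
      rw [Polynomial.eval_map, Polynomial.eval₂_at_apply]
    rw [hq'map] at h1
    have h2 : (K.subtype) (q'.eval cc) = 0 := by
      rw [← h1]
      exact hroot
    exact Subtype.ext h2
  set w : Polynomial ↥K := q' /ₘ (Polynomial.X - Polynomial.C cc) with hwdef
  have hfct : (Polynomial.X - Polynomial.C cc) * w = q' :=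
    (Polynomial.mul_divByMonic_eq_iff_isRoot).2 hq'root
  set W : L[X] := w.map (K.subtype) with hWdef
  have hQfct : (Polynomial.X - Polynomial.C ((K.subtype) cc)) * W = Q := by
    rw [hWdef, ← hq'map, ← hfct, Polynomial.map_mul, Polynomial.map_sub,
      Polynomial.map_X, Polynomial.map_C]
  have hW0 : W ≠ 0 := by
    intro h0
    rw [h0, mul_zero] at hQfct
    exact hQ0 hQfct.symm
  have hWdeglt : W.natDegree < N := by
    have hmul := Polynomial.Monic.natDegree_mul'
      (Polynomial.monic_X_sub_C ((K.subtype) cc)) hW0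
    rw [hQfct, Polynomial.natDegree_X_sub_C, hQdeg] at hmul
    omega
  have hWK : ∀ i, W.coeff i ∈ K := by
    intro i
    rw [hWdef, Polynomial.coeff_map]
    exact (w.coeff i).2
  obtain ⟨tw, htwS, γw, hγw⟩ := hmin W hWK hWdeglt
  -- Step I : contradiction
  have hxc : x - (K.subtype) cc ≠ 0 := by
    intro h0
    rw [sub_eq_zero] at h0
    exact hx (h0 ▸ hcK)
  obtain ⟨τ, hτ⟩ := WithTop.ne_top_iff_exists.1 (v.ne_top_iff.2 hxc)
  have hτS : τ ∈ S := ⟨(K.subtype) cc, hcK, hτ.symm⟩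
  have hbigS : Tall ⊔ TU ⊔ tw ⊔ τ ∈ S :=
    hmaxS _ (hmaxS _ hT1S _ htwS) _ hτS
  obtain ⟨t1, ht1S, ht1⟩ := hnm _ hbigS
  obtain ⟨t2, ht2S, ht2⟩ := hnm t1 ht1S
  have hQval : ∀ k, k ∈ S → Tall ⊔ TU ⊔ tw ⊔ τ < k →
      v (Q.eval (b k)) = (↑τ + γw : WithTop Γ) := by
    intro k hkS hk
    have h1 : Q.eval (b k) = (b k - (K.subtype) cc) * W.eval (b k) := by
      rw [← hQfct, Polynomial.eval_mul, Polynomial.eval_sub, Polynomial.eval_X,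
        Polynomial.eval_C]
    have h2 : v (b k - (K.subtype) cc) = (τ : WithTop Γ) := by
      have hrw : b k - (K.subtype) cc = (b k - x) + (x - (K.subtype) cc) := by ring
      have hlt : v (x - (K.subtype) cc) < v (b k - x) := by
        rw [v.map_sub_swap (b k) x, hbv k hkS, ← hτ, WithTop.coe_lt_coe]
        exact lt_of_le_of_lt le_sup_right hk
      rw [hrw, v.map_add_eq_of_lt_right hlt]
      exact hτ.symm
    have h3 : v (W.eval (b k)) = γw :=
      hγw k hkS (lt_of_le_of_lt (le_sup_left.trans' le_sup_right) hk)
    rw [h1, v.map_mul, h2, h3]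
  have hL1k : ∀ k, k ∈ S → Tall ⊔ TU ⊔ tw ⊔ τ < k →
      v (Q.eval (b k)) = ((μ' h + h • k : Γ) : WithTop Γ) := by
    intro k hkS hk
    exact L1 k hkS (lt_of_le_of_lt (le_sup_left.trans le_sup_left) hk)
  have e1 : ((μ' h + h • t1 : Γ) : WithTop Γ) = (↑τ + γw : WithTop Γ) :=
    (hL1k t1 ht1S ht1).symm.trans (hQval t1 ht1S ht1)
  have e2 : ((μ' h + h • t2 : Γ) : WithTop Γ) = (↑τ + γw : WithTop Γ) :=
    (hL1k t2 ht2S (lt_trans ht1 ht2)).symm.trans (hQval t2 ht2S (lt_trans ht1 ht2))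
  have e3 : μ' h + h • t1 = μ' h + h • t2 := WithTop.coe_inj.1 (e1.trans e2.symm)
  have e4 : h • t1 = h • t2 := add_left_cancel e3
  exact absurd e4 (ne_of_lt (nsmul_lt_nsmul_right (by omega) ht2))
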